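/- Write (q^3;q)_∞ = Σ_{i≥0} b_i q^i. Every integer c occurs as a coefficient of (q^3;q)_∞ infinitely many times; that is, for every c ∈ ℤ, the set {i ∈ ℕ : b_i = c} is infinite. -/

import Mathlib

/-- The infinite product `(q^a;q)_∞ = ∏_{i ≥ 0} (1 - q^{a+i})` in `ℤ[[q]]` (for `a ≥ 1`),
defined coefficientwise via sufficiently large partial products. -/
noncomputable def pochInf (a : ℕ) : PowerSeries ℤ :=
  PowerSeries.mk fun n =>
    (∏ i ∈ Finset.range (n + 1), (1 - Polynomial.X ^ (a + i)) : Polynomial ℤ).coeff n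

/-- `b i` is the coefficient of `q^i` in `(q^3;q)_∞`. -/
noncomputable def b (i : ℕ) : ℤ := PowerSeries.coeff i (pochInf 3)

namespace PentAux


/-- `lo k = k(3k-1)/2`, start of the `k`-th "gap" of `(q^2;q)_∞`. -/
def lo : ℕ → ℕ
  | 0 => 0
  | k + 1 => lo k + 3 * k + 1

/-- `mid k = k(3k+1)/2 = lo k + k`, start of the `k`-th "block". -/
def mid (k : ℕ) : ℕ := lo k + k

lemma lo_succ (k : ℕ) : lo (k + 1) = lo k + 3 * k + 1 := rfl

lemma lo_lt_succ (k : ℕ) : lo k < lo (k + 1) := by simp [lo_succ]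

lemma lo_mono : StrictMono lo := strictMono_nat_of_lt_succ lo_lt_succ

lemma self_lt_lo_succ (k : ℕ) : k ≤ lo (k + 1) := by
  induction k with
  | zero => simp [lo]
  | succ n ih => rw [lo_succ]; omega

lemma exists_lt_lo (n : ℕ) : ∃ k, n < lo (k + 1) := ⟨n + 1, by have := self_lt_lo_succ (n+1); have := lo_lt_succ (n+1); omega⟩

/-- index of the region containing `n`. -/
def kOf (n : ℕ) : ℕ := Nat.find (exists_lt_lo n)

lemma kOf_spec (n : ℕ) : lo (kOf n) ≤ n ∧ n < lo (kOf n + 1) := by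
  constructor
  · rcases Nat.eq_zero_or_pos (kOf n) with h | h
    · rw [h]; simp [lo]
    · have h2 := Nat.find_min (exists_lt_lo n) (show kOf n - 1 < kOf n by omega)
      have h3 : kOf n - 1 + 1 = kOf n := by omega
      rw [h3] at h2
      omega
  · exact Nat.find_spec (exists_lt_lo n)

lemma kOf_eq {k n : ℕ} (h1 : lo k ≤ n) (h2 : n < lo (k + 1)) : kOf n = k := by
  have hs := kOf_spec n
  by_contra hne
  rcases Nat.lt_or_ge (kOf n) k with h | h
  · have : lo (kOf n + 1) ≤ lo k := lo_mono.le_iff_le.mpr (by omega)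
    omega
  · have : lo (k + 1) ≤ lo (kOf n) := lo_mono.le_iff_le.mpr (by omega)
    omega

/-- The explicit coefficient function of `(q^2;q)_∞`. -/
noncomputable def eta (n : ℕ) : ℤ := if n < mid (kOf n) then 0 else (-1) ^ (kOf n)

lemma eta_gap {k n : ℕ} (h1 : lo k ≤ n) (h2 : n < mid k) : eta n = 0 := by
  have hk : kOf n = k := kOf_eq h1 (by have := lo_succ k; unfold mid at h2; omega)
  simp [eta, hk, h2]

lemma eta_block {k n : ℕ} (h1 : mid k ≤ n) (h2 : n < lo (k + 1)) : eta n = (-1) ^ k := by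
  have hk : kOf n = k := kOf_eq (by unfold mid at h1; omega) h2
  simp [eta, hk, Nat.not_lt.mpr h1]

lemma eta_ge_neg_one (n : ℕ) : -1 ≤ eta n := by
  unfold eta
  split
  · norm_num
  · rcases Nat.even_or_odd (kOf n) with h | h
    · rw [h.neg_one_pow]; norm_num
    · rw [h.neg_one_pow]






open Polynomial Finset

lemma coeff_prod_stab {a : ℕ} (ha : 1 ≤ a) (m : ℕ) :
    ∀ N, m ≤ N → ((∏ i ∈ range N, (1 - X ^ (a + i)) : Polynomial ℤ)).coeff m =
      ((∏ i ∈ range m, (1 - X ^ (a + i)) : Polynomial ℤ)).coeff m := by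
  intro N
  induction N with
  | zero =>
    intro h
    have : m = 0 := by omega
    subst this
    rfl
  | succ N ih =>
    intro hN
    rcases Nat.lt_or_ge m (N + 1) with h | h
    · have hmN : m ≤ N := by omega
      rw [prod_range_succ, mul_sub, mul_one, coeff_sub, coeff_mul_X_pow',
        if_neg (by omega), sub_zero, ih hmN]
    · have : m = N + 1 := by omega
      subst this
      rfl

lemma coeff_pochInf (a n : ℕ) :
    PowerSeries.coeff n (pochInf a) =
      ((∏ i ∈ range (n + 1), (1 - X ^ (a + i)) : Polynomial ℤ)).coeff n := by
  simp [pochInf]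

lemma coeff_pochInf_eq {a : ℕ} (ha : 1 ≤ a) {n N : ℕ} (h : n ≤ N) :
    PowerSeries.coeff n (pochInf a) =
      ((∏ i ∈ range N, (1 - X ^ (a + i)) : Polynomial ℤ)).coeff n := by
  rw [coeff_pochInf, coeff_prod_stab ha n (n+1) (by omega), coeff_prod_stab ha n N h]

/-- coefficients of `(q^2;q)_∞`. -/
noncomputable def E2 (n : ℕ) : ℤ := PowerSeries.coeff n (pochInf 2)

/-- coefficients of `(q;q)_∞`. -/
noncomputable def ee (n : ℕ) : ℤ := PowerSeries.coeff n (pochInf 1)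

lemma prod_split (a N : ℕ) :
    (∏ i ∈ range (N + 1), (1 - X ^ (a + i)) : Polynomial ℤ) =
      (1 - X ^ a) * ∏ i ∈ range N, (1 - X ^ (a + 1 + i)) := by
  rw [prod_range_succ']
  rw [mul_comm]
  congr 1
  · apply Finset.prod_congr rfl
    intro i _
    congr 2
    omega

lemma ee_succ (n : ℕ) : ee (n + 1) = E2 (n + 1) - E2 n := by
  have h0 : ee (n+1) = ((∏ i ∈ range (n + 2), (1 - X ^ (1 + i)) : Polynomial ℤ)).coeff (n+1) :=
    coeff_pochInf_eq (by norm_num) (by omega)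
  rw [h0, prod_split 1 (n+1)]
  have h1 : ((1 - X ^ 1) * ∏ i ∈ range (n+1), (1 - X ^ (2 + i)) : Polynomial ℤ).coeff (n+1) =
      ((∏ i ∈ range (n+1), (1 - X ^ (2 + i)) : Polynomial ℤ)).coeff (n+1)
      - ((∏ i ∈ range (n+1), (1 - X ^ (2 + i)) : Polynomial ℤ)).coeff n := by
    rw [sub_mul, one_mul, coeff_sub, pow_one]
    congr 1
    rw [mul_comm, coeff_mul_X]
  rw [h1, ← coeff_pochInf_eq (by norm_num) (by omega : n + 1 ≤ n + 1),
    ← coeff_pochInf_eq (by norm_num) (by omega : n ≤ n + 1)]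
  rfl

lemma b_step (n : ℕ) : b (n + 2) = b n + E2 (n + 2) := by
  have h0 : E2 (n+2) = ((∏ i ∈ range (n + 3), (1 - X ^ (2 + i)) : Polynomial ℤ)).coeff (n+2) :=
    coeff_pochInf_eq (by norm_num) (by omega)
  rw [h0, prod_split 2 (n+2)]
  have h1 : ((1 - X ^ 2) * ∏ i ∈ range (n+2), (1 - X ^ (3 + i)) : Polynomial ℤ).coeff (n+2) =
      ((∏ i ∈ range (n+2), (1 - X ^ (3 + i)) : Polynomial ℤ)).coeff (n+2)
      - ((∏ i ∈ range (n+2), (1 - X ^ (3 + i)) : Polynomial ℤ)).coeff n := by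
    rw [sub_mul, one_mul, coeff_sub]
    congr 1
    rw [mul_comm, coeff_mul_X_pow', if_pos (by omega)]
    norm_num
  rw [h1]
  have hb2 : b (n+2) = ((∏ i ∈ range (n+2), (1 - X ^ (3 + i)) : Polynomial ℤ)).coeff (n+2) :=
    coeff_pochInf_eq (by norm_num) (by omega)
  have hb0 : b n = ((∏ i ∈ range (n+2), (1 - X ^ (3 + i)) : Polynomial ℤ)).coeff n :=
    coeff_pochInf_eq (by norm_num) (by omega)
  rw [← hb2, ← hb0]
  ring

lemma b_zero : b 0 = 1 := by
  have h0 : b 0 = ((∏ i ∈ range 0, (1 - X ^ (3 + i)) : Polynomial ℤ)).coeff 0 :=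
    coeff_pochInf_eq (by norm_num) (by omega)
  simp at h0
  exact h0

lemma b_one : b 1 = 0 := by
  have h0 : b 1 = ((∏ i ∈ range 1, (1 - X ^ (3 + i)) : Polynomial ℤ)).coeff 1 :=
    coeff_pochInf_eq (by norm_num) (by omega)
  simp [coeff_one, coeff_X_pow] at h0
  exact h0

lemma E2_zero : E2 0 = 1 := by
  have h0 : E2 0 = ((∏ i ∈ range 0, (1 - X ^ (2 + i)) : Polynomial ℤ)).coeff 0 :=
    coeff_pochInf_eq (by norm_num) (by omega)
  simpa using h0

/-- the finite set of partitions of `n` into distinct parts (as subsets of `[1,n]`). -/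
def Pn (n : ℕ) : Finset (Finset ℕ) :=
  (Finset.Icc 1 n).powerset.filter (fun S => S.sum id = n)

lemma prod_neg_X_pow (t : Finset ℕ) :
    (∏ m ∈ t, (-X ^ m) : Polynomial ℤ) = C ((-1) ^ t.card) * X ^ (t.sum id) := by
  have h : ∀ m ∈ t, (-X ^ m : Polynomial ℤ) = (C (-1 : ℤ)) * X ^ m := by
    intro m _; simp
  rw [Finset.prod_congr rfl h, Finset.prod_mul_distrib, Finset.prod_const,
    Finset.prod_pow_eq_pow_sum, ← map_pow]
  rfl

lemma ee_eq_sum (n : ℕ) : ee n = ∑ S ∈ Pn n, (-1) ^ S.card := by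
  have h0 : ee n = ((∏ i ∈ range (n + 1), (1 - X ^ (1 + i)) : Polynomial ℤ)).coeff n :=
    coeff_pochInf_eq (by norm_num) (by omega)
  have h1 : Finset.Icc 1 (n+1) = (Finset.range (n+1)).image (· + 1) := by
    ext x
    simp only [Finset.mem_Icc, Finset.mem_image, Finset.mem_range]
    constructor
    · intro hx; exact ⟨x - 1, by omega, by omega⟩
    · rintro ⟨y, hy, rfl⟩; omega
  have h2 : (∏ i ∈ range (n + 1), (1 - X ^ (1 + i)) : Polynomial ℤ)
      = ∏ m ∈ Finset.Icc 1 (n+1), (1 - X ^ m) := by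
    rw [h1, Finset.prod_image (by intro a _ b _ h; simp only at h; omega)]
    apply Finset.prod_congr rfl
    intro i _
    congr 2
    omega
  have h3 : (∏ m ∈ Finset.Icc 1 (n+1), (1 - X ^ m) : Polynomial ℤ)
      = ∑ t ∈ (Finset.Icc 1 (n+1)).powerset, C ((-1) ^ t.card) * X ^ (t.sum id) := by
    have : ∀ m ∈ Finset.Icc 1 (n+1), (1 - X ^ m : Polynomial ℤ) = (-X ^ m) + 1 := by
      intro m _; ring
    rw [Finset.prod_congr rfl this, Finset.prod_add]
    apply Finset.sum_congr rfl
    intro t _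
    rw [prod_neg_X_pow]
    simp
  have h4 : ((∏ i ∈ range (n + 1), (1 - X ^ (1 + i)) : Polynomial ℤ)).coeff n
      = ∑ t ∈ (Finset.Icc 1 (n+1)).powerset, if t.sum id = n then ((-1:ℤ) ^ t.card) else 0 := by
    rw [h2, h3, Polynomial.finset_sum_coeff]
    apply Finset.sum_congr rfl
    intro t _
    rw [Polynomial.coeff_C_mul, Polynomial.coeff_X_pow]
    simp only [id] 
    by_cases h : (∑ x ∈ t, x) = n
    · rw [if_pos h.symm, if_pos h, mul_one]
    · rw [if_neg (fun hh => h hh.symm), if_neg h, mul_zero]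
  have h5 : (Finset.Icc 1 (n+1)).powerset.filter (fun S => S.sum id = n) = Pn n := by
    unfold Pn
    ext S
    simp only [Finset.mem_filter, Finset.mem_powerset]
    constructor
    · rintro ⟨hsub, hsum⟩
      refine ⟨fun x hx => ?_, hsum⟩
      have h1x := hsub hx
      rw [Finset.mem_Icc] at h1x ⊢
      have : x ≤ S.sum id := Finset.single_le_sum (f := id) (fun i _ => Nat.zero_le i) hx
      omega
    · rintro ⟨hsub, hsum⟩
      refine ⟨fun x hx => ?_, hsum⟩
      have h1x := hsub hx
      rw [Finset.mem_Icc] at h1x ⊢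
      omega
  rw [h0, h4, ← Finset.sum_filter, h5]





open Finset

lemma mem_Pn_iff {n : ℕ} {S : Finset ℕ} :
    S ∈ Pn n ↔ (∀ x ∈ S, 1 ≤ x ∧ x ≤ n) ∧ S.sum id = n := by
  unfold Pn
  simp only [Finset.mem_filter, Finset.mem_powerset, Finset.subset_iff, Finset.mem_Icc]

lemma mem_Pn_of {n : ℕ} {S : Finset ℕ} (hsum : S.sum id = n) (hpos : ∀ x ∈ S, 1 ≤ x) :
    S ∈ Pn n := by
  rw [mem_Pn_iff]
  refine ⟨fun x hx => ⟨hpos x hx, ?_⟩, hsum⟩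
  have h2 : id x ≤ S.sum id := Finset.single_le_sum (fun i _ => Nat.zero_le (id i)) hx
  rw [hsum] at h2
  exact h2

lemma Pn_nonempty {n : ℕ} {S : Finset ℕ} (hn : 1 ≤ n) (hS : S ∈ Pn n) : S.Nonempty := by
  rcases S.eq_empty_or_nonempty with rfl | h
  · rw [mem_Pn_iff] at hS
    simp at hS
    omega
  · exact h

/-! ### max/min helpers -/

def maxU (S : Finset ℕ) : ℕ := WithBot.unbotD 0 S.max
def minU (S : Finset ℕ) : ℕ := (S.min.map id).getD 0

lemma maxU_spec {S : Finset ℕ} (h : S.Nonempty) : maxU S ∈ S ∧ ∀ x ∈ S, x ≤ maxU S := by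
  obtain ⟨a, ha⟩ := Finset.max_of_nonempty h
  have h1 : maxU S = a := by unfold maxU; rw [ha]; rfl
  refine ⟨h1 ▸ Finset.mem_of_max ha, fun x hx => h1 ▸ Finset.le_max_of_eq hx ha⟩

lemma minU_spec {S : Finset ℕ} (h : S.Nonempty) : minU S ∈ S ∧ ∀ x ∈ S, minU S ≤ x := by
  obtain ⟨a, ha⟩ := Finset.min_of_nonempty h
  have h1 : minU S = a := by unfold minU; rw [ha]; rfl
  refine ⟨h1 ▸ Finset.mem_of_min ha, fun x hx => h1 ▸ Finset.min_le_of_eq hx ha⟩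

lemma maxU_eq_of {S : Finset ℕ} {m : ℕ} (hmem : m ∈ S) (hub : ∀ x ∈ S, x ≤ m) :
    maxU S = m :=
  le_antisymm (hub _ ((maxU_spec ⟨m, hmem⟩).1)) ((maxU_spec ⟨m, hmem⟩).2 m hmem)

lemma minU_eq_of {S : Finset ℕ} {m : ℕ} (hmem : m ∈ S) (hlb : ∀ x ∈ S, m ≤ x) :
    minU S = m :=
  le_antisymm ((minU_spec ⟨m, hmem⟩).2 m hmem) (hlb _ ((minU_spec ⟨m, hmem⟩).1))

/-! ### the involution -/

def jval (S : Finset ℕ) : ℕ :=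
  WithBot.unbotD 0 (((Finset.range (maxU S + 1)).filter (fun t => t ∉ S)).max)

lemma jval_spec {S : Finset ℕ} (h0 : 0 ∉ S) :
    jval S ∉ S ∧ jval S ≤ maxU S ∧ ∀ t, jval S < t → t ≤ maxU S → t ∈ S := by
  set F := (Finset.range (maxU S + 1)).filter (fun t => t ∉ S) with hF
  have hF0 : (0 : ℕ) ∈ F := by
    rw [hF, Finset.mem_filter, Finset.mem_range]
    exact ⟨by omega, h0⟩
  obtain ⟨a, ha⟩ := Finset.max_of_nonempty ⟨0, hF0⟩
  have hj : jval S = a := by unfold jval; rw [← hF, ha]; rfl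
  have hamem : a ∈ F := Finset.mem_of_max ha
  rw [hF, Finset.mem_filter, Finset.mem_range] at hamem
  refine ⟨hj ▸ hamem.2, by omega, fun t h1 h2 => ?_⟩
  by_contra htS
  have : t ∈ F := by
    rw [hF, Finset.mem_filter, Finset.mem_range]
    exact ⟨by omega, htS⟩
  have := Finset.le_max_of_eq this ha
  omega

def moveA (S : Finset ℕ) : Finset ℕ :=
  ((S.erase (minU S)) \ Finset.Icc (maxU S - minU S + 1) (maxU S)) ∪
    Finset.Icc (maxU S - minU S + 2) (maxU S + 1)

def moveB (S : Finset ℕ) : Finset ℕ :=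
  insert (maxU S - jval S)
    ((S \ Finset.Icc (jval S + 1) (maxU S)) ∪ Finset.Icc (jval S) (maxU S - 1))

noncomputable def franklin (S : Finset ℕ) : Finset ℕ :=
  if Finset.Icc (maxU S - minU S + 1) (maxU S) ⊆ S ∧ S.Nonempty then moveA S else moveB S

def isExc (S : Finset ℕ) : Prop :=
  S = ∅ ∨ (∃ t, 1 ≤ t ∧ S = Finset.Icc t (2*t-1)) ∨ (∃ t, 1 ≤ t ∧ S = Finset.Icc (t+1) (2*t))

lemma mem_moveA {S : Finset ℕ} {x : ℕ} :
    x ∈ moveA S ↔ (x ∈ S ∧ x ≠ minU S ∧ ¬(maxU S - minU S + 1 ≤ x ∧ x ≤ maxU S)) ∨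
      (maxU S - minU S + 2 ≤ x ∧ x ≤ maxU S + 1) := by
  unfold moveA
  simp only [Finset.mem_union, Finset.mem_sdiff, Finset.mem_erase, Finset.mem_Icc]
  constructor
  · rintro (⟨⟨h1, h2⟩, h3⟩ | h)
    · exact Or.inl ⟨h2, h1, h3⟩
    · exact Or.inr h
  · rintro (⟨h1, h2, h3⟩ | h)
    · exact Or.inl ⟨⟨h2, h1⟩, h3⟩
    · exact Or.inr h

lemma mem_moveB {S : Finset ℕ} {x : ℕ} :
    x ∈ moveB S ↔ x = maxU S - jval S ∨
      (x ∈ S ∧ ¬(jval S + 1 ≤ x ∧ x ≤ maxU S)) ∨ (jval S ≤ x ∧ x ≤ maxU S - 1) := by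
  unfold moveB
  simp only [Finset.mem_insert, Finset.mem_union, Finset.mem_sdiff, Finset.mem_Icc]

lemma sum_Icc_shift (a b : ℕ) (h : a ≤ b) :
    (Finset.Icc (a+1) (b+1)).sum id = (Finset.Icc a b).sum id + (b + 1 - a) := by
  have him : Finset.Icc (a+1) (b+1) = (Finset.Icc a b).image (· + 1) := by
    ext x
    simp only [Finset.mem_Icc, Finset.mem_image]
    constructor
    · intro hx; exact ⟨x - 1, by omega, by omega⟩
    · rintro ⟨y, hy, rfl⟩; omega
  rw [him, Finset.sum_image (by intro u _ v _ h; simp only at h; omega)]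
  have : ∀ y ∈ Finset.Icc a b, id (y + 1) = id y + 1 := fun y _ => rfl
  rw [Finset.sum_congr rfl this, Finset.sum_add_distrib, Finset.sum_const, Nat.card_Icc]
  simp [Nat.smul_one_eq_cast]

lemma caseA {n : ℕ} {S : Finset ℕ} (hS : S ∈ Pn n) (hne : S.Nonempty)
    (hA : Finset.Icc (maxU S - minU S + 1) (maxU S) ⊆ S) (hexc : ¬ isExc S) :
    franklin S = moveA S ∧ moveA S ∈ Pn n ∧ ¬ isExc (moveA S) ∧
      franklin (moveA S) = S ∧ (moveA S).card + 1 = S.card := by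
  obtain ⟨hPn, hsum⟩ := mem_Pn_iff.mp hS
  obtain ⟨hMmem, hMub⟩ := maxU_spec hne
  obtain ⟨hsmem, hslb⟩ := minU_spec hne
  set M := maxU S with hMdef
  set s := minU S with hsdef
  have hs1 : 1 ≤ s := (hPn s hsmem).1
  have hsM : s ≤ M := hMub s hsmem
  have hMIcc : M - s + 1 ∈ S := hA (Finset.mem_Icc.mpr ⟨le_refl _, by omega⟩)
  have hsle : s ≤ M - s + 1 := hslb _ hMIcc
  -- exclude M = 2s - 1
  have hM2s : 2 * s ≤ M := by
    by_contra hcon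
    have hM : M = 2 * s - 1 := by omega
    apply hexc
    refine Or.inr (Or.inl ⟨s, hs1, ?_⟩)
    apply Finset.Subset.antisymm
    · intro x hx
      rw [Finset.mem_Icc]
      exact ⟨hslb x hx, by have := hMub x hx; omega⟩
    · intro x hx
      rw [Finset.mem_Icc] at hx
      apply hA
      rw [Finset.mem_Icc]
      omega
  set T := moveA S with hTdef
  have hTchar : ∀ x, x ∈ T ↔ (x ∈ S ∧ x ≠ s ∧ ¬(M - s + 1 ≤ x ∧ x ≤ M)) ∨
      (M - s + 2 ≤ x ∧ x ≤ M + 1) := fun x => mem_moveA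
  have hTM : M + 1 ∈ T := (hTchar _).mpr (Or.inr ⟨by omega, le_refl _⟩)
  have hTub : ∀ x ∈ T, x ≤ M + 1 := by
    intro x hx
    rcases (hTchar x).mp hx with ⟨h1, _, _⟩ | ⟨_, h2⟩
    · have := hMub x h1; omega
    · exact h2
  have hTlb : ∀ x ∈ T, s + 1 ≤ x := by
    intro x hx
    rcases (hTchar x).mp hx with ⟨h1, h2, _⟩ | ⟨h1, _⟩
    · have := hslb x h1; omega
    · omega
  have hTne : T.Nonempty := ⟨M + 1, hTM⟩
  have hT0 : 0 ∉ T := fun h => by have := hTlb 0 h; omega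
  have hmaxT : maxU T = M + 1 := maxU_eq_of hTM hTub
  have hgap : M - s + 1 ∉ T := by
    intro h
    rcases (hTchar _).mp h with ⟨_, _, h3⟩ | ⟨h1, _⟩
    · exact h3 ⟨le_refl _, by omega⟩
    · omega
  -- sums and cards
  have hsub1 : Finset.Icc (M - s + 1) M ⊆ S.erase s := by
    intro x hx
    rw [Finset.mem_erase]
    rw [Finset.mem_Icc] at hx
    exact ⟨by omega, hA (Finset.mem_Icc.mpr hx)⟩
  have hdisj : Disjoint ((S.erase s) \ Finset.Icc (M - s + 1) M)
      (Finset.Icc (M - s + 2) (M + 1)) := by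
    rw [Finset.disjoint_left]
    intro x hx hx2
    rw [Finset.mem_sdiff, Finset.mem_erase, Finset.mem_Icc] at hx
    rw [Finset.mem_Icc] at hx2
    have := hMub x hx.1.2
    omega
  have hsumT : T.sum id = ((S.erase s) \ Finset.Icc (M - s + 1) M).sum id
      + (Finset.Icc (M - s + 2) (M + 1)).sum id := Finset.sum_union hdisj
  have hshift : (Finset.Icc (M - s + 2) (M + 1)).sum id
      = (Finset.Icc (M - s + 1) M).sum id + s := by
    have h1 := sum_Icc_shift (M - s + 1) M (by omega)
    have h2 : M - s + 1 + 1 = M - s + 2 := by omega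
    have h3 : M + 1 - (M - s + 1) = s := by omega
    rw [h2, h3] at h1
    exact h1
  have hsd : ((S.erase s) \ Finset.Icc (M - s + 1) M).sum id
      + (Finset.Icc (M - s + 1) M).sum id = (S.erase s).sum id :=
    Finset.sum_sdiff hsub1
  have her : (S.erase s).sum id + s = S.sum id := by
    have := Finset.sum_erase_add S id hsmem
    simpa using this
  have hTsum : T.sum id = n := by omega
  have hcardT : T.card + 1 = S.card := by
    have hc1 : T.card = ((S.erase s) \ Finset.Icc (M - s + 1) M).card
        + (Finset.Icc (M - s + 2) (M + 1)).card := Finset.card_union_of_disjoint hdisj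
    have hc2 : ((S.erase s) \ Finset.Icc (M - s + 1) M).card
        + (Finset.Icc (M - s + 1) M).card = (S.erase s).card :=
      Finset.card_sdiff_add_card_eq_card hsub1
    have hc3 : (S.erase s).card + 1 = S.card := Finset.card_erase_add_one hsmem
    rw [Nat.card_Icc] at hc1 hc2
    omega
  have hTPn : T ∈ Pn n := mem_Pn_of hTsum (fun x hx => by have := hTlb x hx; omega)
  -- franklin S = moveA S
  have hfr : franklin S = moveA S := by
    unfold franklin
    rw [if_pos ⟨hA, hne⟩]
  -- T is in case B
  have hminTlb : s + 1 ≤ minU T := hTlb _ (minU_spec hTne).1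
  have hminTub : minU T ≤ M + 1 := hTub _ (minU_spec hTne).1
  have hnotAT : ¬ (Finset.Icc (maxU T - minU T + 1) (maxU T) ⊆ T) := by
    intro hsub
    apply hgap
    apply hsub
    rw [hmaxT, Finset.mem_Icc]
    omega
  have hjT : jval T = M - s + 1 := by
    obtain ⟨hj1, hj2, hj3⟩ := jval_spec hT0
    rw [hmaxT] at hj2 hj3
    have hge : M - s + 1 ≤ jval T := by
      by_contra hcon
      exact hgap (hj3 _ (by omega) (by omega))
    have hle : jval T ≤ M - s + 1 := by
      by_contra hcon
      exact hj1 ((hTchar _).mpr (Or.inr ⟨by omega, by omega⟩))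
    omega
  have hfrT : franklin T = S := by
    unfold franklin
    rw [if_neg (by tauto)]
    apply Finset.ext
    intro x
    rw [mem_moveB, hjT, hmaxT]
    have he1 : M + 1 - (M - s + 1) = s := by omega
    have he2 : M - s + 1 + 1 = M - s + 2 := by omega
    rw [he1, he2]
    constructor
    · rintro (rfl | ⟨hxT, hnot⟩ | ⟨h1, h2⟩)
      · exact hsmem
      · rcases (hTchar x).mp hxT with ⟨h1, _, _⟩ | ⟨h1, h2⟩
        · exact h1
        · exact absurd ⟨h1, h2⟩ hnot
      · exact hA (Finset.mem_Icc.mpr ⟨h1, by omega⟩)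
    · intro hxS
      by_cases hxs : x = s
      · exact Or.inl hxs
      · by_cases hxi : M - s + 1 ≤ x
        · have := hMub x hxS
          exact Or.inr (Or.inr ⟨hxi, by omega⟩)
        · refine Or.inr (Or.inl ⟨(hTchar x).mpr (Or.inl ⟨hxS, hxs, by omega⟩), by omega⟩)
  -- T is not exceptional
  have hTexc : ¬ isExc T := by
    rintro (habs | ⟨t, ht1, habs⟩ | ⟨t, ht1, habs⟩)
    · rw [habs] at hTM
      simp at hTM
    · -- staircase shape satisfies condition A
      apply hnotAT
      have hmin : minU T = t := by
        rw [habs]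
        exact minU_eq_of (Finset.mem_Icc.mpr ⟨le_refl _, by omega⟩)
          (fun x hx => (Finset.mem_Icc.mp hx).1)
      have hmax : maxU T = 2*t - 1 := by
        rw [habs]
        exact maxU_eq_of (Finset.mem_Icc.mpr ⟨by omega, le_refl _⟩)
          (fun x hx => (Finset.mem_Icc.mp hx).2)
      rw [hmin, hmax, habs]
      intro x hx
      rw [Finset.mem_Icc] at *
      omega
    · -- second shape: impossible by the gap
      have hmax : maxU T = 2*t := by
        rw [habs]
        exact maxU_eq_of (Finset.mem_Icc.mpr ⟨by omega, le_refl _⟩)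
          (fun x hx => (Finset.mem_Icc.mp hx).2)
      have h2t : 2*t = M + 1 := by rw [← hmax, hmaxT]
      have hmem2 : M - s + 2 ∈ T := (hTchar _).mpr (Or.inr ⟨le_refl _, by omega⟩)
      rw [habs, Finset.mem_Icc] at hmem2
      have hgap2 : ¬ (t + 1 ≤ M - s + 1 ∧ M - s + 1 ≤ 2*t) := by
        intro hcon
        exact hgap (by rw [habs, Finset.mem_Icc]; exact hcon)
      omega
  exact ⟨hfr, hTPn, hTexc, hfrT, hcardT⟩

lemma caseB {n : ℕ} {S : Finset ℕ} (hS : S ∈ Pn n) (hne : S.Nonempty)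
    (hnA : ¬ (Finset.Icc (maxU S - minU S + 1) (maxU S) ⊆ S)) (hexc : ¬ isExc S) :
    franklin S = moveB S ∧ moveB S ∈ Pn n ∧ ¬ isExc (moveB S) ∧
      franklin (moveB S) = S ∧ S.card + 1 = (moveB S).card := by
  obtain ⟨hPn, hsum⟩ := mem_Pn_iff.mp hS
  obtain ⟨hMmem, hMub⟩ := maxU_spec hne
  obtain ⟨hsmem, hslb⟩ := minU_spec hne
  set M := maxU S with hMdef
  set s := minU S with hsdef
  have h0S : 0 ∉ S := fun h => by have := (hPn 0 h).1; omega
  obtain ⟨hj1, hj2, hj3⟩ := jval_spec (S := S) h0S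
  set j := jval S with hjdef
  have hs1 : 1 ≤ s := (hPn s hsmem).1
  have hsM : s ≤ M := hMub s hsmem
  have hjM : j ≠ M := fun h => hj1 (h ▸ hMmem)
  have hj1' : 1 ≤ j := by
    by_contra hcon
    have hj0 : j = 0 := by omega
    apply hnA
    intro x hx
    rw [Finset.mem_Icc] at hx
    have hin : 1 ∈ S := hj3 1 (by omega) (by omega)
    have hs_eq : s = 1 := le_antisymm (by have := hslb 1 hin; omega) hs1
    apply hj3 x (by omega) hx.2
  have hsj : M - s + 1 ≤ j := by
    by_contra hcon
    apply hnA
    intro x hx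
    rw [Finset.mem_Icc] at hx
    exact hj3 x (by omega) hx.2
  have hrs : M - j + 1 ≤ s := by omega
  -- M ≤ 2j - 1
  have hstairsub : Finset.Icc (j+1) M ⊆ S := by
    intro x hx
    rw [Finset.mem_Icc] at hx
    exact hj3 x (by omega) hx.2
  have hMj : M + 1 ≤ 2 * j := by
    by_cases hrest : ∃ x ∈ S, x < j
    · obtain ⟨x, hxS, hxj⟩ := hrest
      have := hslb x hxS
      omega
    · push_neg at hrest
      have hSeq : S = Finset.Icc (j+1) M := by
        apply Finset.Subset.antisymm
        · intro x hx
          rw [Finset.mem_Icc]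
          have h1 := hrest x hx
          have h2 := hMub x hx
          have h3 : x ≠ j := fun h => hj1 (h ▸ hx)
          omega
        · exact hstairsub
      have hsval : s = j + 1 := by
        rw [hsdef, hSeq]
        exact minU_eq_of (Finset.mem_Icc.mpr ⟨le_refl _, by omega⟩)
          (fun x hx => (Finset.mem_Icc.mp hx).1)
      have hM2j : M ≤ 2 * j := by omega
      have hMne : M ≠ 2 * j := by
        intro hcon
        apply hexc
        refine Or.inr (Or.inr ⟨j, hj1', ?_⟩)
        rw [hSeq, hcon]
      omega
  set U := moveB S with hUdef
  have hUchar : ∀ x, x ∈ U ↔ x = M - j ∨ (x ∈ S ∧ ¬(j + 1 ≤ x ∧ x ≤ M)) ∨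
      (j ≤ x ∧ x ≤ M - 1) := fun x => mem_moveB
  have huM : M - 1 ∈ U := (hUchar _).mpr (Or.inr (Or.inr ⟨by omega, le_refl _⟩))
  have hub : ∀ x ∈ U, x ≤ M - 1 := by
    intro x hx
    rcases (hUchar x).mp hx with rfl | ⟨h1, h2⟩ | ⟨h1, h2⟩
    · omega
    · have := hMub x h1
      have : x ≠ j := fun h => hj1 (h ▸ h1)
      omega
    · exact h2
  have hlb : ∀ x ∈ U, M - j ≤ x := by
    intro x hx
    rcases (hUchar x).mp hx with rfl | ⟨h1, h2⟩ | ⟨h1, h2⟩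
    · exact le_refl _
    · have := hslb x h1; omega
    · omega
  have hUne : U.Nonempty := ⟨M - 1, huM⟩
  have hU0 : 0 ∉ U := fun h => by have := hlb 0 h; omega
  have hmaxU : maxU U = M - 1 := maxU_eq_of huM hub
  have hrU : M - j ∈ U := (hUchar _).mpr (Or.inl rfl)
  have hminU : minU U = M - j := minU_eq_of hrU hlb
  -- sums and cards
  have hrnotin : M - j ∉ (S \ Finset.Icc (j+1) M) ∪ Finset.Icc j (M - 1) := by
    intro h
    simp only [Finset.mem_union, Finset.mem_sdiff, Finset.mem_Icc] at h
    rcases h with ⟨h1, _⟩ | ⟨h1, _⟩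
    · have := hslb _ h1; omega
    · omega
  have hdisj : Disjoint (S \ Finset.Icc (j+1) M) (Finset.Icc j (M - 1)) := by
    rw [Finset.disjoint_left]
    intro x hx hx2
    rw [Finset.mem_sdiff, Finset.mem_Icc] at hx
    rw [Finset.mem_Icc] at hx2
    have := hMub x hx.1
    have : x ≠ j := fun h => hj1 (h ▸ hx.1)
    omega
  have hsumU : U.sum id = (M - j) + ((S \ Finset.Icc (j+1) M).sum id
      + (Finset.Icc j (M - 1)).sum id) := by
    rw [hUdef]
    unfold moveB
    rw [Finset.sum_insert hrnotin, Finset.sum_union hdisj]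
    rfl
  have hshift : (Finset.Icc (j+1) M).sum id = (Finset.Icc j (M - 1)).sum id + (M - j) := by
    have h1 := sum_Icc_shift j (M - 1) (by omega)
    have h2 : M - 1 + 1 = M := by omega
    rw [h2] at h1
    exact h1
  have hsd : (S \ Finset.Icc (j+1) M).sum id + (Finset.Icc (j+1) M).sum id = S.sum id :=
    Finset.sum_sdiff hstairsub
  have hUsum : U.sum id = n := by omega
  have hcardU : S.card + 1 = U.card := by
    have hc1 : U.card = ((S \ Finset.Icc (j+1) M) ∪ Finset.Icc j (M - 1)).card + 1 := by
      rw [hUdef]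
      unfold moveB
      rw [Finset.card_insert_of_notMem hrnotin]
    have hc2 : ((S \ Finset.Icc (j+1) M) ∪ Finset.Icc j (M - 1)).card
        = (S \ Finset.Icc (j+1) M).card + (Finset.Icc j (M - 1)).card :=
      Finset.card_union_of_disjoint hdisj
    have hc3 : (S \ Finset.Icc (j+1) M).card + (Finset.Icc (j+1) M).card = S.card :=
      Finset.card_sdiff_add_card_eq_card hstairsub
    rw [Nat.card_Icc] at hc2 hc3
    omega
  have hUPn : U ∈ Pn n := mem_Pn_of hUsum (fun x hx => by have := hlb x hx; omega)
  have hfr : franklin S = moveB S := by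
    unfold franklin
    rw [if_neg (by tauto)]
  -- U is in case A
  have hAU : Finset.Icc (maxU U - minU U + 1) (maxU U) ⊆ U := by
    rw [hmaxU, hminU]
    have he : M - 1 - (M - j) + 1 = j := by omega
    rw [he]
    intro x hx
    rw [Finset.mem_Icc] at hx
    exact (hUchar _).mpr (Or.inr (Or.inr hx))
  have hfrU : franklin U = S := by
    unfold franklin
    rw [if_pos ⟨hAU, hUne⟩]
    unfold moveA
    rw [← hjdef] at *
    apply Finset.ext
    intro x
    rw [Finset.mem_union, Finset.mem_sdiff, Finset.mem_erase, Finset.mem_Icc, Finset.mem_Icc,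
      hmaxU, hminU]
    have he1 : M - 1 - (M - j) + 1 = j := by omega
    have he2 : M - 1 - (M - j) + 2 = j + 1 := by omega
    have he3 : M - 1 + 1 = M := by omega
    rw [he1, he2, he3]
    constructor
    · rintro (⟨⟨hx1, hx2⟩, hx3⟩ | ⟨h1, h2⟩)
      · rcases (hUchar x).mp hx2 with rfl | ⟨h1, h2⟩ | ⟨h1, h2⟩
        · exact absurd rfl hx1
        · exact h1
        · exact absurd ⟨h1, h2⟩ hx3
      · exact hstairsub (Finset.mem_Icc.mpr ⟨h1, h2⟩)
    · intro hxS
      by_cases hxj : j + 1 ≤ x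
      · exact Or.inr ⟨hxj, hMub x hxS⟩
      · have hxne : x ≠ j := fun h => hj1 (h ▸ hxS)
        have hxs := hslb x hxS
        refine Or.inl ⟨⟨by omega, (hUchar x).mpr (Or.inr (Or.inl ⟨hxS, by omega⟩))⟩, by omega⟩
  -- U not exceptional
  have hUexc : ¬ isExc U := by
    rintro (habs | ⟨t, ht1, habs⟩ | ⟨t, ht1, habs⟩)
    · rw [habs] at huM
      simp at huM
    · have hmin : minU U = t := by
        rw [habs]
        exact minU_eq_of (Finset.mem_Icc.mpr ⟨le_refl _, by omega⟩)
          (fun x hx => (Finset.mem_Icc.mp hx).1)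
      have hmax : maxU U = 2*t - 1 := by
        rw [habs]
        exact maxU_eq_of (Finset.mem_Icc.mpr ⟨by omega, le_refl _⟩)
          (fun x hx => (Finset.mem_Icc.mp hx).2)
      rw [hminU] at hmin
      rw [hmaxU] at hmax
      omega
    · have hmin : minU U = t + 1 := by
        rw [habs]
        exact minU_eq_of (Finset.mem_Icc.mpr ⟨le_refl _, by omega⟩)
          (fun x hx => (Finset.mem_Icc.mp hx).1)
      have hmax : maxU U = 2*t := by
        rw [habs]
        exact maxU_eq_of (Finset.mem_Icc.mpr ⟨by omega, le_refl _⟩)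
          (fun x hx => (Finset.mem_Icc.mp hx).2)
      rw [hminU] at hmin
      rw [hmaxU] at hmax
      omega
  exact ⟨hfr, hUPn, hUexc, hfrU, hcardU⟩



/-! ### the main involution bundle -/

lemma franklin_master {n : ℕ} (hn : 1 ≤ n) {S : Finset ℕ} (hS : S ∈ Pn n)
    (hexc : ¬ isExc S) :
    franklin S ∈ Pn n ∧ ¬ isExc (franklin S) ∧ franklin (franklin S) = S ∧
      ((-1 : ℤ) ^ S.card + (-1) ^ (franklin S).card = 0) ∧ franklin S ≠ S := by
  have hne := Pn_nonempty hn hS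
  by_cases hA : Finset.Icc (maxU S - minU S + 1) (maxU S) ⊆ S
  · obtain ⟨h1, h2, h3, h4, h5⟩ := caseA hS hne hA hexc
    rw [h1]
    refine ⟨h2, h3, h4, ?_, ?_⟩
    · rw [← h5, pow_succ]
      ring
    · intro heq
      rw [heq] at h5
      omega
  · obtain ⟨h1, h2, h3, h4, h5⟩ := caseB hS hne hA hexc
    rw [h1]
    refine ⟨h2, h3, h4, ?_, ?_⟩
    · rw [← h5, pow_succ]
      ring
    · intro heq
      rw [heq] at h5
      omega

open scoped Classical in
lemma sum_not_exc_zero {n : ℕ} (hn : 1 ≤ n) :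
    (∑ S ∈ (Pn n).filter (fun S => ¬ isExc S), (-1 : ℤ) ^ S.card) = 0 := by
  classical
  apply Finset.sum_involution (g := fun S _ => franklin S)
  · intro S hS
    rw [Finset.mem_filter] at hS
    exact (franklin_master hn hS.1 hS.2).2.2.2.1
  · intro S hS _
    rw [Finset.mem_filter] at hS
    exact (franklin_master hn hS.1 hS.2).2.2.2.2
  · intro S hS
    rw [Finset.mem_filter] at hS ⊢
    obtain ⟨h1, h2, _, _, _⟩ := franklin_master hn hS.1 hS.2
    exact ⟨h1, h2⟩
  · intro S hS
    rw [Finset.mem_filter] at hS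
    exact (franklin_master hn hS.1 hS.2).2.2.1

open scoped Classical in
lemma sum_Pn_eq_exc {n : ℕ} (hn : 1 ≤ n) :
    (∑ S ∈ Pn n, (-1 : ℤ) ^ S.card) = ∑ S ∈ (Pn n).filter isExc, (-1 : ℤ) ^ S.card := by
  classical
  have h := Finset.sum_filter_add_sum_filter_not (Pn n) isExc (fun S => (-1 : ℤ) ^ S.card)
  rw [← h, sum_not_exc_zero hn, add_zero]

/-! ### Gauss sums for staircases -/

lemma sum_Icc_gauss (a : ℕ) : ∀ c : ℕ, (Finset.Icc a (a + c)).sum id * 2 = (2*a + c) * (c + 1)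
  | 0 => by simp [Finset.Icc_self]; ring
  | (c+1) => by
    have ih := sum_Icc_gauss a c
    have hstep : (Finset.Icc a (a + (c+1))).sum id
        = (Finset.Icc a (a + c)).sum id + (a + c + 1) := by
      have : a + (c + 1) = (a + c) + 1 := by omega
      rw [this, Finset.sum_Icc_succ_top (by omega)]
      rfl
    rw [hstep]
    nlinarith [ih]

lemma lo_sq (k : ℕ) : lo (k + 1) * 2 = 3*k*k + 5*k + 2 := by
  induction k with
  | zero => rfl
  | succ m ih =>
    rw [lo_succ]
    nlinarith [ih]

lemma sum_stair1 {k : ℕ} (hk : 1 ≤ k) : (Finset.Icc k (2*k - 1)).sum id = lo k := by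
  cases k with
  | zero => omega
  | succ m =>
    have h1 : 2 * (m + 1) - 1 = (m + 1) + m := by omega
    rw [h1]
    have h2 := sum_Icc_gauss (m + 1) m
    have h3 := lo_sq m
    have hx : (2*(m + 1) + m) * (m + 1) = 3*m*m + 5*m + 2 := by ring
    linarith [h2, h3, hx]

lemma sum_stair2 {k : ℕ} (hk : 1 ≤ k) : (Finset.Icc (k+1) (2*k)).sum id = mid k := by
  cases k with
  | zero => omega
  | succ m =>
    have h1 : 2 * (m + 1) = ((m + 1) + 1) + m := by omega
    rw [h1]
    have h2 := sum_Icc_gauss (m + 1 + 1) m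
    have h3 := lo_sq m
    have hx : (2*(m + 1 + 1) + m) * (m + 1) = 3*m*m + 7*m + 4 := by ring
    unfold mid
    rw [lo_succ] at h3 ⊢
    linarith [h2, h3, hx]

lemma lo_pos {k : ℕ} (hk : 1 ≤ k) : 1 ≤ lo k := by
  calc 1 = lo 1 := rfl
  _ ≤ lo k := lo_mono.le_iff_le.mpr hk

lemma mid_pos {k : ℕ} (hk : 1 ≤ k) : 1 ≤ mid k := by
  unfold mid
  omega

lemma mid_mono : StrictMono mid := by
  apply strictMono_nat_of_lt_succ
  intro k
  unfold mid
  rw [lo_succ]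
  omega

lemma lo_lt_mid {k : ℕ} (hk : 1 ≤ k) : lo k < mid k := by
  unfold mid
  omega

lemma mid_lt_lo_succ (k : ℕ) : mid k < lo (k + 1) := by
  unfold mid
  rw [lo_succ]
  omega

lemma lo_ne_mid {k t : ℕ} (hk : 1 ≤ k) (ht : 1 ≤ t) : lo k ≠ mid t := by
  intro h
  have h1 : lo t < lo k := h ▸ lo_lt_mid ht
  have h2 : lo k < lo (t + 1) := h ▸ mid_lt_lo_succ t
  have := lo_mono.lt_iff_lt.mp h1
  have := lo_mono.lt_iff_lt.mp h2
  omega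

/-! ### identifying the exceptional partitions -/

open scoped Classical in
lemma exc_lo {k : ℕ} (hk : 1 ≤ k) :
    (Pn (lo k)).filter isExc = {Finset.Icc k (2*k - 1)} := by
  classical
  ext S
  rw [Finset.mem_filter, Finset.mem_singleton]
  constructor
  · rintro ⟨hS, hexc⟩
    have hsum := (mem_Pn_iff.mp hS).2
    rcases hexc with rfl | ⟨t, ht1, rfl⟩ | ⟨t, ht1, rfl⟩
    · simp at hsum
      have := lo_pos hk
      omega
    · have := sum_stair1 ht1
      rw [this] at hsum
      have := lo_mono.injective hsum
      rw [this]
    · have := sum_stair2 ht1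
      rw [this] at hsum
      exact absurd hsum.symm (lo_ne_mid hk ht1)
  · rintro rfl
    refine ⟨mem_Pn_of (sum_stair1 hk) (fun x hx => ?_), Or.inr (Or.inl ⟨k, hk, rfl⟩)⟩
    rw [Finset.mem_Icc] at hx
    omega

open scoped Classical in
lemma exc_mid {k : ℕ} (hk : 1 ≤ k) :
    (Pn (mid k)).filter isExc = {Finset.Icc (k+1) (2*k)} := by
  classical
  ext S
  rw [Finset.mem_filter, Finset.mem_singleton]
  constructor
  · rintro ⟨hS, hexc⟩
    have hsum := (mem_Pn_iff.mp hS).2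
    rcases hexc with rfl | ⟨t, ht1, rfl⟩ | ⟨t, ht1, rfl⟩
    · simp at hsum
      have := mid_pos hk
      omega
    · have := sum_stair1 ht1
      rw [this] at hsum
      exact absurd hsum (lo_ne_mid ht1 hk)
    · have := sum_stair2 ht1
      rw [this] at hsum
      have := mid_mono.injective hsum
      rw [this]
  · rintro rfl
    refine ⟨mem_Pn_of (sum_stair2 hk) (fun x hx => ?_), Or.inr (Or.inr ⟨k, hk, rfl⟩)⟩
    rw [Finset.mem_Icc] at hx
    omega

open scoped Classical in
lemma exc_other {n : ℕ} (hn : 1 ≤ n) (h : ∀ k, 1 ≤ k → n ≠ lo k ∧ n ≠ mid k) :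
    (Pn n).filter isExc = ∅ := by
  classical
  ext S
  rw [Finset.mem_filter]
  simp only [Finset.notMem_empty, iff_false]
  rintro ⟨hS, hexc⟩
  have hsum := (mem_Pn_iff.mp hS).2
  rcases hexc with rfl | ⟨t, ht1, rfl⟩ | ⟨t, ht1, rfl⟩
  · simp at hsum
    omega
  · rw [sum_stair1 ht1] at hsum
    exact (h t ht1).1 hsum.symm
  · rw [sum_stair2 ht1] at hsum
    exact (h t ht1).2 hsum.symm

/-! ### the pentagonal number theorem -/

lemma card_stair1 {k : ℕ} (hk : 1 ≤ k) : (Finset.Icc k (2*k - 1)).card = k := by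
  rw [Nat.card_Icc]
  omega

lemma card_stair2 (k : ℕ) : (Finset.Icc (k+1) (2*k)).card = k := by
  rw [Nat.card_Icc]
  omega

lemma ee_lo {k : ℕ} (hk : 1 ≤ k) : ee (lo k) = (-1) ^ k := by
  rw [ee_eq_sum, sum_Pn_eq_exc (lo_pos hk)]
  classical
  rw [exc_lo hk, Finset.sum_singleton, card_stair1 hk]

lemma ee_mid {k : ℕ} (hk : 1 ≤ k) : ee (mid k) = (-1) ^ k := by
  rw [ee_eq_sum, sum_Pn_eq_exc (mid_pos hk)]
  classical
  rw [exc_mid hk, Finset.sum_singleton, card_stair2]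

lemma ee_other {n : ℕ} (hn : 1 ≤ n) (h : ∀ k, 1 ≤ k → n ≠ lo k ∧ n ≠ mid k) :
    ee n = 0 := by
  rw [ee_eq_sum, sum_Pn_eq_exc hn]
  classical
  rw [exc_other hn h, Finset.sum_empty]

/-! ### the coefficients of `(q^2;q)_∞` are `eta` -/

lemma E2_eq_eta : ∀ n, E2 n = eta n := by
  intro n
  induction n with
  | zero =>
    rw [E2_zero]
    have hk : kOf 0 = 0 := kOf_eq (by simp [lo]) (by simp [lo])
    unfold eta
    rw [hk]
    simp [mid, lo]
  | succ n ih =>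
    have hrec : E2 (n+1) = E2 n + ee (n+1) := by
      have := ee_succ n
      omega
    obtain ⟨hk1, hk2⟩ := kOf_spec (n+1)
    by_cases hlo : n + 1 = lo (kOf (n+1))
    · cases hkc : kOf (n+1) with
      | zero =>
        rw [hkc] at hlo
        simp [lo] at hlo
      | succ j =>
        rw [hkc] at hlo hk1 hk2
        have hls := lo_succ j
        have hls2 := lo_succ (j+1)
        have hmj : mid j = lo j + j := rfl
        have hmj1 : mid (j+1) = lo (j+1) + (j+1) := rfl
        have hee : ee (n+1) = (-1:ℤ)^(j+1) := by rw [hlo]; exact ee_lo (by omega)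
        have heta_n : eta n = (-1:ℤ)^j := eta_block (k := j) (by omega) (by omega)
        have heta_n1 : eta (n+1) = 0 := eta_gap (k := j+1) (by omega) (by omega)
        rw [heta_n1, hrec, ih, heta_n, hee, pow_succ]
        ring
    · by_cases hmid : n + 1 = mid (kOf (n+1))
      · cases hkc : kOf (n+1) with
        | zero =>
          rw [hkc] at hmid
          simp [mid, lo] at hmid
        | succ j =>
          rw [hkc] at hmid hk1 hk2 hlo
          have hls := lo_succ j
          have hls2 := lo_succ (j+1)
          have hmj1 : mid (j+1) = lo (j+1) + (j+1) := rfl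
          have hee : ee (n+1) = (-1:ℤ)^(j+1) := by rw [hmid]; exact ee_mid (by omega)
          have heta_n : eta n = 0 := eta_gap (k := j+1) (by omega) (by omega)
          have heta_n1 : eta (n+1) = (-1:ℤ)^(j+1) :=
            eta_block (k := j+1) (by omega) (by omega)
          rw [heta_n1, hrec, ih, heta_n, hee]
          ring
      · have hee : ee (n+1) = 0 := by
          apply ee_other (by omega)
          intro t ht
          have hlt : lo t < mid t := lo_lt_mid ht
          have hml : mid t < lo (t+1) := mid_lt_lo_succ t
          constructor
          · intro hcon
            have hk : kOf (n+1) = t := kOf_eq (by omega) (by omega)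
            rw [hk] at hlo
            exact hlo hcon
          · intro hcon
            have hk : kOf (n+1) = t := kOf_eq (by omega) (by omega)
            rw [hk] at hmid
            exact hmid hcon
        have hmidk : mid (kOf (n+1)) = lo (kOf (n+1)) + kOf (n+1) := rfl
        have heta : eta (n+1) = eta n := by
          by_cases hb : n + 1 < mid (kOf (n+1))
          · rw [eta_gap (k := kOf (n+1)) (by omega) hb,
              eta_gap (k := kOf (n+1)) (n := n) (by omega) (by omega)]
          · rw [eta_block (k := kOf (n+1)) (by omega) (by omega),
              eta_block (k := kOf (n+1)) (by omega) (by omega)]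
        rw [heta, hrec, ih, hee, add_zero]

lemma b_eta (n : ℕ) : b (n + 2) = b n + eta (n + 2) := by
  rw [b_step n, E2_eq_eta]

/-! ### walking along the coefficients -/

lemma walk (m : ℕ) (x : ℤ) :
    ∀ t : ℕ, (∀ i, 1 ≤ i → i ≤ t → eta (m + 2*i) = x) → b (m + 2*t) = b m + t * x := by
  intro t
  induction t with
  | zero => simp
  | succ t ih =>
    intro hx
    have h1 : m + 2*(t+1) = (m + 2*t) + 2 := by ring
    rw [h1, b_eta, ih (fun i hi1 hi2 => hx i hi1 (by omega))]
    have h2 : (m + 2*t) + 2 = m + 2*(t+1) := by ring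
    rw [h2, hx (t+1) (by omega) (le_refl _)]
    push_cast
    ring

lemma lo_ge (k : ℕ) : k ≤ lo (k + 1) := self_lt_lo_succ k

lemma T1 (u : ℕ) : b (lo (2*u+4) - 1) = b (lo (2*u+3) - 1) - (2*u+4) := by
  have hL : 1 ≤ lo (2*u+3) := lo_pos (by omega)
  have hsucc0 := lo_succ (2*u+3)
  have hmid : mid (2*u+3) = lo (2*u+3) + (2*u+3) := rfl
  have hnext : lo (2*u+4) = lo (2*u+3) + 6*u + 10 := by
    have e : 2*u+3+1 = 2*u+4 := by omega
    rw [e] at hsucc0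
    omega
  have hsucc := lo_succ (2*u+3)
  have hgap : b (lo (2*u+3) - 1 + 2*(u+1)) = b (lo (2*u+3) - 1) + (u+1) * 0 := by
    apply walk
    intro i hi1 hi2
    exact eta_gap (k := 2*u+3) (by omega) (by omega)
  have hblock : b ((lo (2*u+3) + 2*u+1) + 2*(2*u+4))
      = b (lo (2*u+3) + 2*u+1) + (2*u+4) * (-1) := by
    apply walk
    intro i hi1 hi2
    have h := eta_block (k := 2*u+3) (n := lo (2*u+3) + 2*u+1 + 2*i) (by omega) (by omega)
    rw [h, Odd.neg_one_pow ⟨u+1, by ring⟩]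
  have he1 : lo (2*u+3) - 1 + 2*(u+1) = lo (2*u+3) + 2*u + 1 := by omega
  have he2 : (lo (2*u+3) + 2*u+1) + 2*(2*u+4) = lo (2*u+4) - 1 := by omega
  rw [he1] at hgap
  rw [he2] at hblock
  rw [hblock, hgap]
  push_cast
  ring

lemma T2 (u : ℕ) : b (lo (2*u+4) - 2) = b (lo (2*u+3) - 2) - (2*u+3) := by
  have hL : 2 ≤ lo (2*u+3) := by
    have h := lo_ge (2*u+2)
    have e : 2*u+2+1 = 2*u+3 := by omega
    rw [e] at h
    omega
  have hsucc0 := lo_succ (2*u+3)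
  have hmid : mid (2*u+3) = lo (2*u+3) + (2*u+3) := rfl
  have hnext : lo (2*u+4) = lo (2*u+3) + 6*u + 10 := by
    have h := lo_succ (2*u+3)
    have e : 2*u+3+1 = 2*u+4 := by omega
    rw [e] at h
    omega
  have hgap : b (lo (2*u+3) - 2 + 2*(u+2)) = b (lo (2*u+3) - 2) + (u+2) * 0 := by
    apply walk
    intro i hi1 hi2
    exact eta_gap (k := 2*u+3) (by omega) (by omega)
  have hblock : b ((lo (2*u+3) + 2*u+2) + 2*(2*u+3))
      = b (lo (2*u+3) + 2*u+2) + (2*u+3) * (-1) := by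
    apply walk
    intro i hi1 hi2
    have h := eta_block (k := 2*u+3) (n := lo (2*u+3) + 2*u+2 + 2*i) (by omega) (by omega)
    rw [h, Odd.neg_one_pow ⟨u+1, by ring⟩]
  have he1 : lo (2*u+3) - 2 + 2*(u+2) = lo (2*u+3) + 2*u + 2 := by omega
  have he2 : (lo (2*u+3) + 2*u+2) + 2*(2*u+3) = lo (2*u+4) - 2 := by omega
  rw [he1] at hgap
  rw [he2] at hblock
  rw [hblock, hgap]
  push_cast
  ring

lemma T3 (u : ℕ) : b (lo (2*u+5) - 1) = b (lo (2*u+4) - 2) + (2*u+5) := by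
  have hL : 2 ≤ lo (2*u+4) := by
    have h := lo_ge (2*u+3)
    have e : 2*u+3+1 = 2*u+4 := by omega
    rw [e] at h
    omega
  have hsucc0 := lo_succ (2*u+4)
  have hmid : mid (2*u+4) = lo (2*u+4) + (2*u+4) := rfl
  have hnext : lo (2*u+5) = lo (2*u+4) + 6*u + 13 := by
    have h := lo_succ (2*u+4)
    have e : 2*u+4+1 = 2*u+5 := by omega
    rw [e] at h
    omega
  have hgap : b (lo (2*u+4) - 2 + 2*(u+2)) = b (lo (2*u+4) - 2) + (u+2) * 0 := by
    apply walk
    intro i hi1 hi2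
    exact eta_gap (k := 2*u+4) (by omega) (by omega)
  have hblock : b ((lo (2*u+4) + 2*u+2) + 2*(2*u+5))
      = b (lo (2*u+4) + 2*u+2) + (2*u+5) * 1 := by
    apply walk
    intro i hi1 hi2
    have h := eta_block (k := 2*u+4) (n := lo (2*u+4) + 2*u+2 + 2*i) (by omega) (by omega)
    rw [h, Even.neg_one_pow ⟨u+2, by ring⟩]
  have he1 : lo (2*u+4) - 2 + 2*(u+2) = lo (2*u+4) + 2*u + 2 := by omega
  have he2 : (lo (2*u+4) + 2*u+2) + 2*(2*u+5) = lo (2*u+5) - 1 := by omega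
  rw [he1] at hgap
  rw [he2] at hblock
  rw [hblock, hgap]
  push_cast
  ring

lemma T4 (u : ℕ) : b (lo (2*u+5) - 2) = b (lo (2*u+4) - 1) + (2*u+4) := by
  have hL : 1 ≤ lo (2*u+4) := lo_pos (by omega)
  have hsucc0 := lo_succ (2*u+4)
  have hmid : mid (2*u+4) = lo (2*u+4) + (2*u+4) := rfl
  have hnext : lo (2*u+5) = lo (2*u+4) + 6*u + 13 := by
    have h := lo_succ (2*u+4)
    have e : 2*u+4+1 = 2*u+5 := by omega
    rw [e] at h
    omega
  have hgap : b (lo (2*u+4) - 1 + 2*(u+2)) = b (lo (2*u+4) - 1) + (u+2) * 0 := by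
    apply walk
    intro i hi1 hi2
    exact eta_gap (k := 2*u+4) (by omega) (by omega)
  have hblock : b ((lo (2*u+4) + 2*u+3) + 2*(2*u+4))
      = b (lo (2*u+4) + 2*u+3) + (2*u+4) * 1 := by
    apply walk
    intro i hi1 hi2
    have h := eta_block (k := 2*u+4) (n := lo (2*u+4) + 2*u+3 + 2*i) (by omega) (by omega)
    rw [h, Even.neg_one_pow ⟨u+2, by ring⟩]
  have he1 : lo (2*u+4) - 1 + 2*(u+2) = lo (2*u+4) + 2*u + 3 := by omega
  have he2 : (lo (2*u+4) + 2*u+3) + 2*(2*u+4) = lo (2*u+5) - 2 := by omega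
  rw [he1] at hgap
  rw [he2] at hblock
  rw [hblock, hgap]
  push_cast
  ring

/-! ### small values of b -/

lemma eta_small :
    eta 2 = -1 ∧ eta 3 = -1 ∧ eta 4 = -1 ∧ eta 5 = 0 ∧ eta 6 = 0 ∧
      eta 7 = 1 ∧ eta 8 = 1 ∧ eta 9 = 1 ∧ eta 10 = 1 ∧ eta 11 = 1 := by
  refine ⟨?_, ?_, ?_, ?_, ?_, ?_, ?_, ?_, ?_, ?_⟩
  · rw [eta_block (k := 1) (by decide) (by decide)]; ring
  · rw [eta_block (k := 1) (by decide) (by decide)]; ring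
  · rw [eta_block (k := 1) (by decide) (by decide)]; ring
  · exact eta_gap (k := 2) (by decide) (by decide)
  · exact eta_gap (k := 2) (by decide) (by decide)
  · rw [eta_block (k := 2) (by decide) (by decide)]; ring
  · rw [eta_block (k := 2) (by decide) (by decide)]; ring
  · rw [eta_block (k := 2) (by decide) (by decide)]; ring
  · rw [eta_block (k := 2) (by decide) (by decide)]; ring
  · rw [eta_block (k := 2) (by decide) (by decide)]; ring

lemma b_small : b 3 = -1 ∧ b 4 = -1 ∧ b 10 = 1 ∧ b 11 = 2 := by
  obtain ⟨e2, e3, e4, e5, e6, e7, e8, e9, e10, e11⟩ := eta_small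
  have h2 : b 2 = b 0 + eta 2 := b_eta 0
  have h3 : b 3 = b 1 + eta 3 := b_eta 1
  have h4 : b 4 = b 2 + eta 4 := b_eta 2
  have h5 : b 5 = b 3 + eta 5 := b_eta 3
  have h6 : b 6 = b 4 + eta 6 := b_eta 4
  have h7 : b 7 = b 5 + eta 7 := b_eta 5
  have h8 : b 8 = b 6 + eta 8 := b_eta 6
  have h9 : b 9 = b 7 + eta 9 := b_eta 7
  have h10 : b 10 = b 8 + eta 10 := b_eta 8
  have h11 : b 11 = b 9 + eta 11 := b_eta 9
  have hb0 := b_zero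
  have hb1 := b_one
  omega

/-! ### the key values -/

lemma vv : ∀ t : ℕ, (b (lo (2*t+2) - 1) = -(t+1) ∧ b (lo (2*t+2) - 2) = -(t+1)) ∧
    (b (lo (2*t+3) - 1) = (t+2) ∧ b (lo (2*t+3) - 2) = (t+1)) := by
  intro t
  induction t with
  | zero =>
    obtain ⟨h3, h4, h10, h11⟩ := b_small
    have hlo2 : lo 2 = 5 := by decide
    have hlo3 : lo 3 = 12 := by decide
    norm_num [hlo2, hlo3]
    exact ⟨⟨h4, h3⟩, h11, h10⟩
  | succ t ih =>
    obtain ⟨⟨ha1, ha2⟩, hb1, hb2⟩ := ih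
    have e1 : 2*(t+1)+2 = 2*t+4 := by ring
    have e2 : 2*(t+1)+3 = 2*t+5 := by ring
    rw [e1, e2]
    have t1 := T1 t
    have t2 := T2 t
    have t3 := T3 t
    have t4 := T4 t
    constructor
    · constructor
      · rw [t1, hb1]; push_cast; ring
      · rw [t2, hb2]; push_cast; ring
    · constructor
      · rw [t3, t2, hb2]; push_cast; ring
      · rw [t4, t1, hb1]; push_cast; ring

/-! ### discrete intermediate value theorem -/

lemma ivt (f : ℕ → ℤ) (hf : ∀ j, f j - 1 ≤ f (j+1)) (c : ℤ) :
    ∀ T, c ≤ f 0 → f T ≤ c → ∃ j, j ≤ T ∧ f j = c := by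
  intro T
  induction T with
  | zero =>
    intro h1 h2
    exact ⟨0, le_refl _, le_antisymm h2 h1⟩
  | succ T ih =>
    intro h1 h2
    by_cases hT : f T ≤ c
    · obtain ⟨j, hj1, hj2⟩ := ih h1 hT
      exact ⟨j, by omega, hj2⟩
    · refine ⟨T+1, le_refl _, ?_⟩
      have := hf T
      omega

lemma exists_hit (c : ℤ) (N : ℕ) : ∃ n : ℕ, N < n ∧ b n = c := by
  set t := c.natAbs + N + 1 with htdef
  set a := lo (2*t+3) - 1 with hadef
  have hla : 2*t+2 ≤ lo (2*t+3) := lo_ge (2*t+2)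
  have hstep : ∀ j, b (a + 2*j) - 1 ≤ b (a + 2*(j+1)) := by
    intro j
    have he : a + 2*(j+1) = (a + 2*j) + 2 := by ring
    rw [he, b_eta]
    have := eta_ge_neg_one ((a + 2*j) + 2)
    omega
  have hstart : b a = t + 2 := by
    have := (vv t).2.1
    rw [← hadef] at this
    exact_mod_cast this
  have hnext : lo (2*t+4) = lo (2*t+3) + 6*t + 10 := by
    have h := lo_succ (2*t+3)
    have he : 2*t+3+1 = 2*t+4 := by omega
    rw [he] at h
    omega
  have hend : b (a + 2*(3*t+5)) = -(t+2) := by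
    have h := (vv (t+1)).1.1
    have he : 2*(t+1)+2 = 2*t+4 := by ring
    rw [he] at h
    have he2 : a + 2*(3*t+5) = lo (2*t+4) - 1 := by omega
    rw [he2, h]
    push_cast
    ring
  have hcabs : (c.natAbs : ℤ) ≤ t := by
    rw [htdef]
    push_cast
    omega
  have hc1 : c ≤ b a := by
    rw [hstart]
    have := Int.le_natAbs (a := c)
    omega
  have hc2 : b (a + 2*(3*t+5)) ≤ c := by
    rw [hend]
    have h1 := Int.le_natAbs (a := c)
    have h2 : -c ≤ c.natAbs := by
      have := Int.le_natAbs (a := -c)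
      simpa using this
    omega
  obtain ⟨j, hj1, hj2⟩ := ivt (fun j => b (a + 2*j)) hstep c (3*t+5) hc1 hc2
  refine ⟨a + 2*j, ?_, hj2⟩
  omega

end PentAux

theorem every_integer_occurs_infinitely_often :
    ∀ c : ℤ, {i : ℕ | b i = c}.Infinite := by
  intro c
  apply Set.infinite_of_forall_exists_gt
  intro N
  obtain ⟨n, hn1, hn2⟩ := PentAux.exists_hit c N
  exact ⟨n, hn2, hn1⟩
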